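/- Let a : ℕ → ℝ with ∑ₙ aₙ² < ∞ (i.e. (aₙ²) summable). Then the infinite product probability measures P₊ := ⨂_{n∈ℕ} gaussianReal(aₙ, 1) and P₋ := ⨂_{n∈ℕ} gaussianReal(0, 1) on ℕ → ℝ are mutually absolutely continuous (equivalent). (Finite cumulative squared signal-to-noise implies the two test measures remain equivalent and the model-risk never resolves.) -/

import Mathlib

open MeasureTheory ProbabilityTheory Real Filter Finset
open scoped ENNReal NNReal Topology

theorem kak_lintegral_pi_prod {n : ℕ} (μ : Fin n → Measure ℝ) [∀ i, SigmaFinite (μ i)]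
    (g : Fin n → ℝ → ℝ≥0∞) (hg : ∀ i, Measurable (g i)) :
    ∫⁻ x, ∏ i, g i (x i) ∂Measure.pi μ = ∏ i, ∫⁻ x, g i x ∂μ i := by
  induction n with
  | zero => simp
  | succ n ih =>
    have h := (measurePreserving_piFinSuccAbove μ 0).symm
    rw [← h.lintegral_comp_emb
      (MeasurableEquiv.piFinSuccAbove (fun _ : Fin (n+1) => ℝ) 0).symm.measurableEmbedding]
    simp_rw [MeasurableEquiv.piFinSuccAbove_symm_apply, Fin.insertNthEquiv,
      Fin.prod_univ_succ, Fin.insertNth_zero, Equiv.coe_fn_mk, Fin.cons_succ, Fin.cons_zero]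
    simp only [cast_eq, Fin.zero_succAbove]
    rw [lintegral_prod_mul (f := g 0) (g := fun y : Fin n → ℝ => ∏ x : Fin n, g x.succ (y x)) (hg 0).aemeasurable
      (Finset.measurable_prod Finset.univ
        (fun i _ => (hg i.succ).comp (measurable_pi_apply i))).aemeasurable,
      ih _ (fun i => g i.succ) (fun i => hg i.succ)]

theorem kak_pdf_mul (w t d x : ℝ) :
    gaussianPDFReal w 1 x * Real.exp (t * x + d)
      = Real.exp (t * w + t ^ 2 / 2 + d) * gaussianPDFReal (w + t) 1 x := by
  simp only [gaussianPDFReal, NNReal.coe_one, mul_one]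
  have h : Real.exp (-(x - w) ^ 2 / 2) * Real.exp (t * x + d)
      = Real.exp (t * w + t ^ 2 / 2 + d) * Real.exp (-(x - (w + t)) ^ 2 / 2) := by
    rw [← Real.exp_add, ← Real.exp_add]; congr 1; ring
  rw [mul_assoc, h, mul_left_comm]

theorem kak_lintegral_exp_gaussian (w t d : ℝ) :
    ∫⁻ x, ENNReal.ofReal (Real.exp (t * x + d)) ∂gaussianReal w 1
      = ENNReal.ofReal (Real.exp (t * w + t ^ 2 / 2 + d)) := by
  rw [gaussianReal_of_var_ne_zero w one_ne_zero,
    lintegral_withDensity_eq_lintegral_mul _ (measurable_gaussianPDF w 1)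
      (by fun_prop : Measurable fun x : ℝ => ENNReal.ofReal (Real.exp (t * x + d)))]
  have hpt : ∀ x, gaussianPDF w 1 x * ENNReal.ofReal (Real.exp (t * x + d))
      = ENNReal.ofReal (Real.exp (t * w + t ^ 2 / 2 + d)) * gaussianPDF (w + t) 1 x := by
    intro x
    rw [gaussianPDF, gaussianPDF, ← ENNReal.ofReal_mul (gaussianPDFReal_nonneg _ _ _),
      ← ENNReal.ofReal_mul (Real.exp_pos _).le, kak_pdf_mul]
  simp only [Pi.mul_apply, hpt]
  rw [lintegral_const_mul _ (measurable_gaussianPDF _ 1),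
    lintegral_gaussianPDF_eq_one _ one_ne_zero, mul_one]

theorem kak_gaussian_shift (u v : ℝ) :
    gaussianReal u 1 = (gaussianReal v 1).withDensity
      (fun x => ENNReal.ofReal (Real.exp ((u - v) * x + (v ^ 2 - u ^ 2) / 2))) := by
  rw [gaussianReal_of_var_ne_zero u one_ne_zero, gaussianReal_of_var_ne_zero v one_ne_zero,
    ← withDensity_mul _ (measurable_gaussianPDF v 1)
      (by fun_prop : Measurable fun x : ℝ =>
        ENNReal.ofReal (Real.exp ((u - v) * x + (v ^ 2 - u ^ 2) / 2)))]
  congr 1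
  funext x
  rw [Pi.mul_apply, gaussianPDF, gaussianPDF, ← ENNReal.ofReal_mul (gaussianPDFReal_nonneg _ _ _),
    kak_pdf_mul]
  have h1 : (u - v) * v + (u - v) ^ 2 / 2 + (v ^ 2 - u ^ 2) / 2 = 0 := by ring
  have h2 : v + (u - v) = u := by ring
  rw [h1, h2, Real.exp_zero, one_mul]

theorem kak_pi_gaussian_density {n : ℕ} (u v : Fin n → ℝ) :
    Measure.pi (fun i => gaussianReal (u i) 1)
      = (Measure.pi fun i => gaussianReal (v i) 1).withDensity
        (fun x => ∏ i, ENNReal.ofReal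
          (Real.exp ((u i - v i) * x i + ((v i) ^ 2 - (u i) ^ 2) / 2))) := by
  have hg : ∀ i : Fin n, Measurable fun y : ℝ =>
      ENNReal.ofReal (Real.exp ((u i - v i) * y + ((v i) ^ 2 - (u i) ^ 2) / 2)) := by
    intro i; fun_prop
  refine Measure.pi_eq fun s hs => ?_
  set F : (Fin n → ℝ) → ℝ≥0∞ := fun x => ∏ i, ENNReal.ofReal
    (Real.exp ((u i - v i) * x i + ((v i) ^ 2 - (u i) ^ 2) / 2)) with hF
  rw [withDensity_apply _ (MeasurableSet.univ_pi hs),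
    show (∫⁻ a in Set.univ.pi s, F a ∂(Measure.pi fun i => gaussianReal (v i) 1))
      = ∫⁻ a, (Set.univ.pi s).indicator F a ∂(Measure.pi fun i => gaussianReal (v i) 1) from
      (lintegral_indicator (MeasurableSet.univ_pi hs) F).symm]
  have hind : ∀ x : Fin n → ℝ,
      (Set.univ.pi s).indicator F x
        = ∏ i, (s i).indicator (fun y => ENNReal.ofReal
          (Real.exp ((u i - v i) * y + ((v i) ^ 2 - (u i) ^ 2) / 2))) (x i) := by
    intro x
    by_cases hx : x ∈ Set.univ.pi s
    · rw [Set.indicator_of_mem hx]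
      refine Finset.prod_congr rfl fun i _ => ?_
      rw [Set.indicator_of_mem (hx i (Set.mem_univ i))]
    · rw [Set.indicator_of_notMem hx]
      simp only [Set.mem_pi, Set.mem_univ, forall_true_left, not_forall, true_implies] at hx
      obtain ⟨i, hi⟩ := hx
      exact (Finset.prod_eq_zero (Finset.mem_univ i) (Set.indicator_of_notMem hi _)).symm
  simp_rw [hind]
  rw [kak_lintegral_pi_prod _ _ (fun i => ((hg i).indicator (hs i)))]
  refine Finset.prod_congr rfl fun i _ => ?_
  rw [lintegral_indicator (hs i), kak_gaussian_shift (u i) (v i),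
    withDensity_apply _ (hs i)]

/-- projection onto first `n` coordinates -/
noncomputable def kakProj (n : ℕ) : (ℕ → ℝ) → (Fin n → ℝ) := fun ω i => ω i

theorem kakProj_measurable (n : ℕ) : Measurable (kakProj n) :=
  measurable_pi_lambda _ fun i => measurable_pi_apply _

/-- master Gaussian moment computation -/
theorem kak_master {Q : Measure (ℕ → ℝ)} {v : ℕ → ℝ}
    (hQ : ∀ n : ℕ, Measure.map (fun ω (i : Fin n) => ω i) Q =
      Measure.pi fun i : Fin n => gaussianReal (v i) 1)
    (m : ℕ) (t d : ℕ → ℝ) :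
    ∫⁻ ω, ENNReal.ofReal (∏ i ∈ Finset.range m, Real.exp (t i * ω i + d i)) ∂Q
      = ENNReal.ofReal (∏ i ∈ Finset.range m,
          Real.exp (t i * v i + (t i) ^ 2 / 2 + d i)) := by
  have hmeas : Measurable fun x : Fin m → ℝ =>
      ∏ i : Fin m, ENNReal.ofReal (Real.exp (t i * x i + d i)) := by
    refine Finset.measurable_prod _ fun i _ => ?_
    fun_prop
  calc ∫⁻ ω, ENNReal.ofReal (∏ i ∈ Finset.range m, Real.exp (t i * ω i + d i)) ∂Q
      = ∫⁻ ω, (fun x : Fin m → ℝ =>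
          ∏ i : Fin m, ENNReal.ofReal (Real.exp (t i * x i + d i))) (kakProj m ω) ∂Q := by
        congr 1 with ω
        rw [ENNReal.ofReal_prod_of_nonneg (fun i _ => (Real.exp_pos _).le),
          ← Fin.prod_univ_eq_prod_range
            (fun i => ENNReal.ofReal (Real.exp (t i * ω i + d i))) m]
        rfl
    _ = ∫⁻ x, ∏ i : Fin m, ENNReal.ofReal (Real.exp (t i * x i + d i))
          ∂(Measure.pi fun i : Fin m => gaussianReal (v i) 1) := by
        have hQ' : Measure.map (kakProj m) Q
            = Measure.pi fun i : Fin m => gaussianReal (v i) 1 := hQ m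
        rw [← hQ', lintegral_map hmeas (kakProj_measurable m)]
    _ = ∏ i : Fin m, ∫⁻ y, ENNReal.ofReal (Real.exp (t i * y + d i))
          ∂gaussianReal (v i) 1 :=
        kak_lintegral_pi_prod (fun i : Fin m => gaussianReal (v i) 1)
          (fun i y => ENNReal.ofReal (Real.exp (t i * y + d i))) (fun i => by fun_prop)
    _ = ∏ i : Fin m, ENNReal.ofReal (Real.exp (t i * v i + (t i) ^ 2 / 2 + d i)) := by
        exact Finset.prod_congr rfl fun i _ => kak_lintegral_exp_gaussian (v i) (t i) (d i)
    _ = ENNReal.ofReal (∏ i ∈ Finset.range m,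
          Real.exp (t i * v i + (t i) ^ 2 / 2 + d i)) := by
        rw [← ENNReal.ofReal_prod_of_nonneg (fun i _ => (Real.exp_pos _).le),
          Fin.prod_univ_eq_prod_range (fun i => Real.exp (t i * v i + (t i) ^ 2 / 2 + d i)) m]

noncomputable def kakF (u v : ℕ → ℝ) (n : ℕ) (ω : ℕ → ℝ) : ℝ :=
  ∏ i ∈ Finset.range n, Real.exp ((u i - v i) * ω i + ((v i) ^ 2 - (u i) ^ 2) / 2)

noncomputable def kakS (u v : ℕ → ℝ) (n : ℕ) : ℝ := ∑ i ∈ Finset.range n, (u i - v i) ^ 2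

theorem kakF_pos (u v : ℕ → ℝ) (n : ℕ) (ω : ℕ → ℝ) : 0 < kakF u v n ω :=
  Finset.prod_pos fun _ _ => Real.exp_pos _

theorem kakF_measurable (u v : ℕ → ℝ) (n : ℕ) : Measurable (kakF u v n) :=
  Finset.measurable_prod _ fun i _ => by
    have : Measurable fun ω : ℕ → ℝ => ω i := measurable_pi_apply i
    fun_prop

theorem kak_moment {Q : Measure (ℕ → ℝ)} {v : ℕ → ℝ}
    (hQ : ∀ n : ℕ, Measure.map (fun ω (i : Fin n) => ω i) Q =
      Measure.pi fun i : Fin n => gaussianReal (v i) 1)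
    (u : ℕ → ℝ) {n m : ℕ} (hnm : n ≤ m) :
    ∫⁻ ω, ENNReal.ofReal (kakF u v n ω * kakF u v m ω) ∂Q
      = ENNReal.ofReal (Real.exp (kakS u v n)) := by
  set t : ℕ → ℝ := fun i => if i < n then 2 * (u i - v i) else u i - v i with ht
  set d : ℕ → ℝ := fun i => if i < n then (v i) ^ 2 - (u i) ^ 2
    else ((v i) ^ 2 - (u i) ^ 2) / 2 with hd
  have hsplit : ∀ ω : ℕ → ℝ, kakF u v n ω * kakF u v m ω
      = ∏ i ∈ Finset.range m, Real.exp (t i * ω i + d i) := by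
    intro ω
    rw [← Finset.prod_range_mul_prod_Ico (fun i => Real.exp (t i * ω i + d i)) hnm,
      kakF, kakF, ← Finset.prod_range_mul_prod_Ico
        (fun i => Real.exp ((u i - v i) * ω i + ((v i) ^ 2 - (u i) ^ 2) / 2)) hnm,
      ← mul_assoc, ← Finset.prod_mul_distrib]
    congr 1
    · refine Finset.prod_congr rfl fun i hi => ?_
      have hi' : i < n := Finset.mem_range.mp hi
      rw [← Real.exp_add, ht, hd]
      simp only [if_pos hi']
      congr 1; ring
    · refine Finset.prod_congr rfl fun i hi => ?_
      have hi' : ¬ i < n := not_lt.mpr (Finset.mem_Ico.mp hi).1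
      rw [ht, hd]; simp only [if_neg hi']
  simp_rw [hsplit]
  rw [kak_master hQ m t d]
  congr 1
  rw [← Finset.prod_range_mul_prod_Ico
    (fun i => Real.exp (t i * v i + (t i) ^ 2 / 2 + d i)) hnm]
  have h1 : ∏ i ∈ Finset.range n, Real.exp (t i * v i + (t i) ^ 2 / 2 + d i)
      = Real.exp (kakS u v n) := by
    rw [kakS, ← Real.exp_sum]
    refine congrArg Real.exp (Finset.sum_congr rfl fun i hi => ?_)
    have hi' : i < n := Finset.mem_range.mp hi
    rw [ht, hd]; simp only [if_pos hi']; ring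
  have h2 : ∏ i ∈ Finset.Ico n m, Real.exp (t i * v i + (t i) ^ 2 / 2 + d i) = 1 := by
    refine Finset.prod_eq_one fun i hi => ?_
    have hi' : ¬ i < n := not_lt.mpr (Finset.mem_Ico.mp hi).1
    rw [ht, hd]; simp only [if_neg hi']
    rw [show (u i - v i) * v i + (u i - v i) ^ 2 / 2 + ((v i) ^ 2 - (u i) ^ 2) / 2
      = 0 by ring, Real.exp_zero]
  rw [h1, h2, mul_one]

theorem kak_fd {u v : ℕ → ℝ} {P Q : Measure (ℕ → ℝ)} (n : ℕ)
    (hPn : Measure.map (kakProj n) P = Measure.pi fun i : Fin n => gaussianReal (u i) 1)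
    (hQn : Measure.map (kakProj n) Q = Measure.pi fun i : Fin n => gaussianReal (v i) 1)
    (B : Set (Fin n → ℝ)) (hB : MeasurableSet B) :
    P (kakProj n ⁻¹' B)
      = ∫⁻ ω in kakProj n ⁻¹' B, ENNReal.ofReal (kakF u v n ω) ∂Q := by
  have hFm : Measurable fun x : Fin n → ℝ => ∏ i : Fin n,
      ENNReal.ofReal (Real.exp ((u i - v i) * x i + ((v i) ^ 2 - (u i) ^ 2) / 2)) :=
    Finset.measurable_prod _ fun i _ => by fun_prop
  rw [← Measure.map_apply (kakProj_measurable n) hB, hPn,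
    kak_pi_gaussian_density (fun i : Fin n => u i) (fun i : Fin n => v i),
    withDensity_apply _ hB, ← hQn, setLIntegral_map hB hFm (kakProj_measurable n)]
  refine lintegral_congr fun ω => ?_
  rw [kakF, ENNReal.ofReal_prod_of_nonneg (fun i _ => (Real.exp_pos _).le),
    ← Fin.prod_univ_eq_prod_range (fun i => ENNReal.ofReal
      (Real.exp ((u i - v i) * ω i + ((v i) ^ 2 - (u i) ^ 2) / 2))) n]
  rfl

theorem kakS_mono (u v : ℕ → ℝ) {n m : ℕ} (hnm : n ≤ m) : kakS u v n ≤ kakS u v m :=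
  Finset.sum_le_sum_of_subset_of_nonneg (Finset.range_subset_range.mpr hnm)
    fun i _ _ => sq_nonneg _

theorem kak_diff_sq {Q : Measure (ℕ → ℝ)} {v : ℕ → ℝ}
    (hQ : ∀ n : ℕ, Measure.map (fun ω (i : Fin n) => ω i) Q =
      Measure.pi fun i : Fin n => gaussianReal (v i) 1)
    (u : ℕ → ℝ) {n m : ℕ} (hnm : n ≤ m) :
    ∫⁻ ω, ENNReal.ofReal ((kakF u v m ω - kakF u v n ω) ^ 2) ∂Q
      = ENNReal.ofReal (Real.exp (kakS u v m) - Real.exp (kakS u v n)) := by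
  have hmn := kakF_measurable u v n
  have hmm := kakF_measurable u v m
  have key : ∀ ω, ENNReal.ofReal ((kakF u v m ω - kakF u v n ω) ^ 2)
      + ENNReal.ofReal (2 * (kakF u v n ω * kakF u v m ω))
      = ENNReal.ofReal (kakF u v m ω * kakF u v m ω)
        + ENNReal.ofReal (kakF u v n ω * kakF u v n ω) := by
    intro ω
    have p1 := (kakF_pos u v n ω).le
    have p2 := (kakF_pos u v m ω).le
    rw [← ENNReal.ofReal_add (sq_nonneg _) (by positivity),
      ← ENNReal.ofReal_add (by positivity) (by positivity)]
    congr 1; ring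
  have h1 : (∫⁻ ω, ENNReal.ofReal ((kakF u v m ω - kakF u v n ω) ^ 2) ∂Q)
      + ∫⁻ ω, ENNReal.ofReal (2 * (kakF u v n ω * kakF u v m ω)) ∂Q
      = (∫⁻ ω, ENNReal.ofReal (kakF u v m ω * kakF u v m ω) ∂Q)
        + ∫⁻ ω, ENNReal.ofReal (kakF u v n ω * kakF u v n ω) ∂Q := by
    rw [← lintegral_add_left (by fun_prop : Measurable fun ω =>
        ENNReal.ofReal ((kakF u v m ω - kakF u v n ω) ^ 2)),
      ← lintegral_add_left (by fun_prop : Measurable fun ω =>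
        ENNReal.ofReal (kakF u v m ω * kakF u v m ω))]
    exact lintegral_congr key
  have h2 : ∫⁻ ω, ENNReal.ofReal (2 * (kakF u v n ω * kakF u v m ω)) ∂Q
      = ENNReal.ofReal (Real.exp (kakS u v n))
        + ENNReal.ofReal (Real.exp (kakS u v n)) := by
    simp_rw [ENNReal.ofReal_mul (by norm_num : (0:ℝ) ≤ 2)]
    rw [lintegral_const_mul _ (by fun_prop), kak_moment hQ u hnm]
    rw [ENNReal.ofReal_ofNat, two_mul]
  rw [h2, kak_moment hQ u le_rfl, kak_moment hQ u le_rfl] at h1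
  have hsub : ENNReal.ofReal (Real.exp (kakS u v m))
      = ENNReal.ofReal (Real.exp (kakS u v m) - Real.exp (kakS u v n))
        + ENNReal.ofReal (Real.exp (kakS u v n)) := by
    rw [← ENNReal.ofReal_add (sub_nonneg.mpr (Real.exp_le_exp.mpr (kakS_mono u v hnm)))
      (Real.exp_pos _).le, sub_add_cancel]
  rw [hsub] at h1
  have hne : ENNReal.ofReal (Real.exp (kakS u v n)) ≠ ⊤ := ENNReal.ofReal_ne_top
  rw [← add_assoc] at h1
  exact WithTop.add_right_cancel hne (WithTop.add_right_cancel hne h1)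

theorem kak_l1 {Q : Measure (ℕ → ℝ)} [IsProbabilityMeasure Q] {v : ℕ → ℝ}
    (hQ : ∀ n : ℕ, Measure.map (fun ω (i : Fin n) => ω i) Q =
      Measure.pi fun i : Fin n => gaussianReal (v i) 1)
    (u : ℕ → ℝ) {n m : ℕ} (hnm : n ≤ m) {ε : ℝ} (hε : 0 < ε) :
    ∫⁻ ω, ENNReal.ofReal |kakF u v m ω - kakF u v n ω| ∂Q
      ≤ ENNReal.ofReal ((ε ^ 2 + (Real.exp (kakS u v m) - Real.exp (kakS u v n)))
          / (2 * ε)) := by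
  set D : ℝ := Real.exp (kakS u v m) - Real.exp (kakS u v n) with hDdef
  have hD : 0 ≤ D := sub_nonneg.mpr (Real.exp_le_exp.mpr (kakS_mono u v hnm))
  have hpt : ∀ ω, ENNReal.ofReal (2 * ε) * ENNReal.ofReal |kakF u v m ω - kakF u v n ω|
      ≤ ENNReal.ofReal (ε ^ 2) + ENNReal.ofReal ((kakF u v m ω - kakF u v n ω) ^ 2) := by
    intro ω
    rw [← ENNReal.ofReal_mul (by positivity), ← ENNReal.ofReal_add (by positivity) (sq_nonneg _)]
    refine ENNReal.ofReal_le_ofReal ?_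
    nlinarith [sq_nonneg (|kakF u v m ω - kakF u v n ω| - ε), sq_abs (kakF u v m ω - kakF u v n ω)]
  have hdm : Measurable fun ω => ENNReal.ofReal |kakF u v m ω - kakF u v n ω| :=
    ((kakF_measurable u v m).sub (kakF_measurable u v n)).abs.ennreal_ofReal
  have hmain : ENNReal.ofReal (2 * ε) * ∫⁻ ω, ENNReal.ofReal |kakF u v m ω - kakF u v n ω| ∂Q
      ≤ ENNReal.ofReal (ε ^ 2) + ENNReal.ofReal D := by
    calc ENNReal.ofReal (2 * ε) * ∫⁻ ω, ENNReal.ofReal |kakF u v m ω - kakF u v n ω| ∂Q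
        = ∫⁻ ω, ENNReal.ofReal (2 * ε) * ENNReal.ofReal |kakF u v m ω - kakF u v n ω| ∂Q :=
          (lintegral_const_mul _ hdm).symm
      _ ≤ ∫⁻ ω, (ENNReal.ofReal (ε ^ 2)
            + ENNReal.ofReal ((kakF u v m ω - kakF u v n ω) ^ 2)) ∂Q := lintegral_mono hpt
      _ = ENNReal.ofReal (ε ^ 2) + ENNReal.ofReal D := by
          rw [lintegral_add_left measurable_const, lintegral_const, measure_univ, mul_one,
            kak_diff_sq hQ u hnm]
  rw [← ENNReal.ofReal_add (by positivity) hD] at hmain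
  rw [ENNReal.ofReal_div_of_pos (by positivity)]
  rw [ENNReal.le_div_iff_mul_le (Or.inl (by simp [ENNReal.ofReal_eq_zero]; positivity))
    (Or.inl ENNReal.ofReal_ne_top), mul_comm]
  exact hmain

theorem kak_min_ineq (x K : ℝ≥0∞) : x ≤ min x K + x * x / K := by
  by_cases hxK : x ≤ K
  · rw [min_eq_left hxK]; exact le_self_add
  · push_neg at hxK
    rw [min_eq_right hxK.le]
    refine le_add_left ?_
    by_cases hK0 : K = 0
    · subst hK0
      have hx0 : x ≠ 0 := fun h => by simp [h] at hxK
      rw [ENNReal.div_zero (mul_ne_zero hx0 hx0)]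
      exact le_top
    · rw [ENNReal.le_div_iff_mul_le (Or.inl hK0) (Or.inl hxK.ne_top)]
      exact mul_le_mul_right hxK.le x

theorem kak_ac (u v : ℕ → ℝ) (hsum : Summable fun i => (u i - v i) ^ 2)
    (P Q : Measure (ℕ → ℝ)) [IsProbabilityMeasure P] [IsProbabilityMeasure Q]
    (hP : ∀ n : ℕ, Measure.map (fun ω (i : Fin n) => ω i) P =
      Measure.pi fun i : Fin n => gaussianReal (u i) 1)
    (hQ : ∀ n : ℕ, Measure.map (fun ω (i : Fin n) => ω i) Q =
      Measure.pi fun i : Fin n => gaussianReal (v i) 1) :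
    P ≪ Q := by
  classical
  set T : ℝ := ∑' i, (u i - v i) ^ 2 with hT
  have hS_le : ∀ n, kakS u v n ≤ T := fun n =>
    Summable.sum_le_tsum (Finset.range n) (fun i _ => sq_nonneg _) hsum
  have htend : Tendsto (fun n => Real.exp (kakS u v n)) atTop (𝓝 (Real.exp T)) :=
    (Real.continuous_exp.tendsto T).comp hsum.hasSum.tendsto_sum_nat
  have hN : ∀ k : ℕ, ∃ N, ∀ n, N ≤ n → Real.exp T - Real.exp (kakS u v n) ≤ (4:ℝ)⁻¹ ^ k := by
    intro k
    obtain ⟨N, hN⟩ := Metric.tendsto_atTop.mp htend ((4:ℝ)⁻¹ ^ k) (by positivity)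
    refine ⟨N, fun n hn => ?_⟩
    have h := hN n hn
    rw [Real.dist_eq] at h
    have := abs_lt.mp h
    linarith [this.1]
  choose N hN using hN
  set φ : ℕ → ℕ := fun k => Nat.rec (N 0) (fun k ih => max (N (k + 1)) (max (k + 1) (ih + 1))) k
    with hφ
  have hφ_succ : ∀ k, φ k < φ (k + 1) := fun k =>
    lt_of_lt_of_le (Nat.lt_succ_self _) (le_max_of_le_right (le_max_right _ _))
  have hφ_ge : ∀ k, k ≤ φ k := by
    intro k
    induction k with
    | zero => exact Nat.zero_le _
    | succ k ih => exact le_max_of_le_right (le_max_left _ _)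
  have hφ_N : ∀ k, N k ≤ φ k := by
    intro k
    cases k with
    | zero => exact le_rfl
    | succ k => exact le_max_left _ _
  have hgap : ∀ k, Real.exp T - Real.exp (kakS u v (φ k)) ≤ (4:ℝ)⁻¹ ^ k :=
    fun k => hN k _ (hφ_N k)
  -- L¹ bound on consecutive differences
  have hdm : ∀ k, Measurable fun ω =>
      ENNReal.ofReal |kakF u v (φ (k + 1)) ω - kakF u v (φ k) ω| := fun k =>
    ((kakF_measurable u v _).sub (kakF_measurable u v _)).abs.ennreal_ofReal
  have hl1 : ∀ k, ∫⁻ ω, ENNReal.ofReal |kakF u v (φ (k + 1)) ω - kakF u v (φ k) ω| ∂Q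
      ≤ ENNReal.ofReal ((2:ℝ)⁻¹ ^ k) := by
    intro k
    refine (kak_l1 hQ u (hφ_succ k).le (ε := (2:ℝ)⁻¹ ^ k) (by positivity)).trans
      (ENNReal.ofReal_le_ofReal ?_)
    have hd : Real.exp (kakS u v (φ (k + 1))) - Real.exp (kakS u v (φ k)) ≤ (4:ℝ)⁻¹ ^ k := by
      have h1 : Real.exp (kakS u v (φ (k + 1))) ≤ Real.exp T :=
        Real.exp_le_exp.mpr (hS_le _)
      linarith [hgap k]
    have h4 : ((2:ℝ)⁻¹ ^ k) * ((2:ℝ)⁻¹ ^ k) = (4:ℝ)⁻¹ ^ k := by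
      rw [← mul_pow]; norm_num
    rw [div_le_iff₀ (by positivity)]
    have h5 : (((2:ℝ)⁻¹ ^ k)) ^ 2 = (4:ℝ)⁻¹ ^ k := by
      rw [← pow_mul, show (4:ℝ)⁻¹ = 2⁻¹ ^ 2 by norm_num, ← pow_mul]; ring_nf
    have h6 : (2:ℝ)⁻¹ ^ k * (2 * (2:ℝ)⁻¹ ^ k) = 2 * ((2:ℝ)⁻¹ ^ k * (2:ℝ)⁻¹ ^ k) := by ring
    linarith [hd, h4, h5, h6]
  -- a.e. convergence along φ
  have htsum_ne : ∫⁻ ω, ∑' k, ENNReal.ofReal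
      |kakF u v (φ (k + 1)) ω - kakF u v (φ k) ω| ∂Q ≠ ⊤ := by
    rw [lintegral_tsum fun k => (hdm k).aemeasurable]
    refine ne_top_of_le_ne_top ?_ (ENNReal.tsum_le_tsum hl1)
    rw [← ENNReal.ofReal_tsum_of_nonneg (fun k => by positivity)
      (summable_geometric_of_lt_one (by norm_num) (by norm_num))]
    exact ENNReal.ofReal_ne_top
  have hae : ∀ᵐ ω ∂Q, ∑' k, ENNReal.ofReal
      |kakF u v (φ (k + 1)) ω - kakF u v (φ k) ω| < ⊤ :=
    ae_lt_top (Measurable.ennreal_tsum hdm) htsum_ne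
  set G : (ℕ → ℝ) → ℝ≥0∞ :=
    fun ω => Filter.liminf (fun k => ENNReal.ofReal (kakF u v (φ k) ω)) atTop with hG
  have hfm : ∀ k, Measurable fun ω => ENNReal.ofReal (kakF u v (φ k) ω) := fun k =>
    (kakF_measurable u v _).ennreal_ofReal
  have hGm : Measurable G := Measurable.liminf hfm
  have hGt : ∀ᵐ ω ∂Q, Tendsto (fun k => ENNReal.ofReal (kakF u v (φ k) ω)) atTop (𝓝 (G ω)) := by
    filter_upwards [hae] with ω hω
    have h2 : Summable fun k => |kakF u v (φ (k + 1)) ω - kakF u v (φ k) ω| := by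
      have h3 : ∑' k, (‖kakF u v (φ (k + 1)) ω - kakF u v (φ k) ω‖₊ : ℝ≥0∞) ≠ ⊤ := by
        simpa only [← enorm_eq_nnnorm, Real.enorm_eq_ofReal_abs] using hω.ne
      have h4 := ENNReal.tsum_coe_ne_top_iff_summable.mp h3
      have h5 : Summable fun k => ‖kakF u v (φ (k + 1)) ω - kakF u v (φ k) ω‖ :=
        NNReal.summable_coe.mpr h4
      simpa [Real.norm_eq_abs] using h5
    have h6 : Summable fun k => kakF u v (φ (k + 1)) ω - kakF u v (φ k) ω := h2.of_abs
    have h7 := h6.hasSum.tendsto_sum_nat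
    have h8 : Tendsto (fun K => kakF u v (φ K) ω) atTop
        (𝓝 ((∑' k, (kakF u v (φ (k + 1)) ω - kakF u v (φ k) ω)) + kakF u v (φ 0) ω)) := by
      have h9 := h7.add_const (kakF u v (φ 0) ω)
      refine h9.congr fun K => ?_
      rw [Finset.sum_range_sub (fun k => kakF u v (φ k) ω)]
      ring
    have h10 : Tendsto (fun k => ENNReal.ofReal (kakF u v (φ k) ω)) atTop
        (𝓝 (ENNReal.ofReal ((∑' k, (kakF u v (φ (k + 1)) ω - kakF u v (φ k) ω))
          + kakF u v (φ 0) ω))) := (ENNReal.continuous_ofReal.tendsto _).comp h8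
    have hGω : G ω = ENNReal.ofReal ((∑' k, (kakF u v (φ (k + 1)) ω - kakF u v (φ k) ω))
        + kakF u v (φ 0) ω) := h10.liminf_eq
    rw [hGω]
    exact h10
  -- cylinder identity
  have hcyl : ∀ (n : ℕ) (B : Set (Fin n → ℝ)), MeasurableSet B →
      ∫⁻ ω in kakProj n ⁻¹' B, G ω ∂Q = P (kakProj n ⁻¹' B) := by
    intro n B hB
    have hAm : MeasurableSet (kakProj n ⁻¹' B) := kakProj_measurable n hB
    have hconst : ∀ k : ℕ, n ≤ φ k →
        ∫⁻ ω in kakProj n ⁻¹' B, ENNReal.ofReal (kakF u v (φ k) ω) ∂Q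
          = P (kakProj n ⁻¹' B) := by
      intro k hk
      have hBm' : MeasurableSet
          ((fun x : Fin (φ k) → ℝ => fun i : Fin n => x (Fin.castLE hk i)) ⁻¹' B) :=
        (measurable_pi_lambda _ fun i => measurable_pi_apply _) hB
      have hAeq : kakProj n ⁻¹' B = kakProj (φ k) ⁻¹'
          ((fun x : Fin (φ k) → ℝ => fun i : Fin n => x (Fin.castLE hk i)) ⁻¹' B) := rfl
      rw [hAeq]
      exact (kak_fd (φ k) (hP (φ k)) (hQ (φ k)) _ hBm').symm
    have hconst' : ∀ k : ℕ, n ≤ k →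
        ∫⁻ ω in kakProj n ⁻¹' B, ENNReal.ofReal (kakF u v (φ k) ω) ∂Q
          = P (kakProj n ⁻¹' B) := fun k hk => hconst k (hk.trans (hφ_ge k))
    have hle : ∫⁻ ω in kakProj n ⁻¹' B, G ω ∂Q ≤ P (kakProj n ⁻¹' B) := by
      have h1 := lintegral_liminf_le (μ := Q.restrict (kakProj n ⁻¹' B))
        (f := fun k ω => ENNReal.ofReal (kakF u v (φ k) ω)) (u := atTop) hfm
      have h2 : Filter.liminf (fun k =>
          ∫⁻ ω in kakProj n ⁻¹' B, ENNReal.ofReal (kakF u v (φ k) ω) ∂Q) atTop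
          = P (kakProj n ⁻¹' B) := by
        refine Filter.Tendsto.liminf_eq ?_
        refine tendsto_const_nhds.congr' ?_
        filter_upwards [eventually_ge_atTop n] with k hk
        exact (hconst' k hk).symm
      rw [← h2]
      exact h1
    have hfin : ∫⁻ ω in kakProj n ⁻¹' B, G ω ∂Q ≠ ⊤ :=
      (hle.trans_lt (measure_lt_top P _)).ne
    have hge : P (kakProj n ⁻¹' B) ≤ ∫⁻ ω in kakProj n ⁻¹' B, G ω ∂Q := by
      refine ENNReal.le_of_forall_pos_le_add fun ε hε _ => ?_
      set C : ℝ≥0∞ := ENNReal.ofReal (Real.exp T) with hC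
      have hC0 : C ≠ 0 := by simp [hC, ENNReal.ofReal_eq_zero, not_le, Real.exp_pos]
      have hCtop : C ≠ ⊤ := ENNReal.ofReal_ne_top
      set K : ℝ≥0∞ := C * (ε : ℝ≥0∞)⁻¹ with hK
      have hKtop : K ≠ ⊤ := by
        refine ENNReal.mul_ne_top hCtop ?_
        simp [ENNReal.inv_ne_top]
        exact_mod_cast hε.ne'
      have hbound : ∀ k : ℕ, n ≤ k → P (kakProj n ⁻¹' B)
          ≤ (∫⁻ ω in kakProj n ⁻¹' B, min (ENNReal.ofReal (kakF u v (φ k) ω)) K ∂Q)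
            + C / K := by
        intro k hk
        rw [← hconst' k hk]
        calc ∫⁻ ω in kakProj n ⁻¹' B, ENNReal.ofReal (kakF u v (φ k) ω) ∂Q
            ≤ ∫⁻ ω in kakProj n ⁻¹' B, (min (ENNReal.ofReal (kakF u v (φ k) ω)) K
                + ENNReal.ofReal (kakF u v (φ k) ω) * ENNReal.ofReal (kakF u v (φ k) ω) / K) ∂Q :=
              lintegral_mono fun ω => kak_min_ineq _ _
          _ = (∫⁻ ω in kakProj n ⁻¹' B, min (ENNReal.ofReal (kakF u v (φ k) ω)) K ∂Q)
                + ∫⁻ ω in kakProj n ⁻¹' B,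
                  ENNReal.ofReal (kakF u v (φ k) ω) * ENNReal.ofReal (kakF u v (φ k) ω) / K ∂Q :=
              lintegral_add_left ((hfm k).min measurable_const) _
          _ ≤ (∫⁻ ω in kakProj n ⁻¹' B, min (ENNReal.ofReal (kakF u v (φ k) ω)) K ∂Q)
                + C / K := by
              refine add_le_add_right ?_ _
              have hmul : ∀ ω : ℕ → ℝ, ENNReal.ofReal (kakF u v (φ k) ω)
                  * ENNReal.ofReal (kakF u v (φ k) ω) / K
                  = ENNReal.ofReal (kakF u v (φ k) ω * kakF u v (φ k) ω) * K⁻¹ := by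
                intro ω
                rw [ENNReal.ofReal_mul (kakF_pos u v _ ω).le, div_eq_mul_inv]
              simp_rw [hmul]
              have hK0' : K ≠ 0 :=
                mul_ne_zero hC0 (ENNReal.inv_ne_zero.mpr ENNReal.coe_ne_top)
              rw [lintegral_mul_const' _ _ (ENNReal.inv_ne_top.mpr hK0')]
              have h11 : ∫⁻ ω in kakProj n ⁻¹' B,
                  ENNReal.ofReal (kakF u v (φ k) ω * kakF u v (φ k) ω) ∂Q ≤ C := by
                refine le_trans (setLIntegral_le_lintegral _ _) ?_
                rw [kak_moment hQ u le_rfl]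
                exact ENNReal.ofReal_le_ofReal (Real.exp_le_exp.mpr (hS_le _))
              rw [div_eq_mul_inv]
              exact mul_le_mul_left h11 _
      have htendmin : Tendsto (fun k => ∫⁻ ω in kakProj n ⁻¹' B,
          min (ENNReal.ofReal (kakF u v (φ k) ω)) K ∂Q) atTop
          (𝓝 (∫⁻ ω in kakProj n ⁻¹' B, min (G ω) K ∂Q)) := by
        refine tendsto_lintegral_of_dominated_convergence (fun _ => K)
          (fun k => (hfm k).min measurable_const)
          (fun k => Filter.Eventually.of_forall fun ω => min_le_right _ _) ?_ ?_
        · rw [lintegral_const]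
          exact ENNReal.mul_ne_top hKtop (measure_ne_top _ _)
        · refine ae_restrict_of_ae ?_
          filter_upwards [hGt] with ω hω
          exact hω.min tendsto_const_nhds
      have hPA : P (kakProj n ⁻¹' B) ≤ (∫⁻ ω in kakProj n ⁻¹' B, min (G ω) K ∂Q) + C / K := by
        refine ge_of_tendsto (htendmin.add tendsto_const_nhds) ?_
        filter_upwards [eventually_ge_atTop n] with k hk using hbound k hk
      have hminle : (∫⁻ ω in kakProj n ⁻¹' B, min (G ω) K ∂Q)
          ≤ ∫⁻ ω in kakProj n ⁻¹' B, G ω ∂Q := lintegral_mono fun ω => min_le_left _ _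
      have hCK : C / K ≤ (ε : ℝ≥0∞) := by
        rw [hK, div_eq_mul_inv, ENNReal.mul_inv (Or.inl hC0) (Or.inl hCtop), inv_inv,
          ← mul_assoc, ENNReal.mul_inv_cancel hC0 hCtop, one_mul]
      calc P (kakProj n ⁻¹' B)
          ≤ (∫⁻ ω in kakProj n ⁻¹' B, min (G ω) K ∂Q) + C / K := hPA
        _ ≤ (∫⁻ ω in kakProj n ⁻¹' B, G ω ∂Q) + ε := add_le_add hminle hCK
    exact le_antisymm hle hge
  -- conclusion via π-system uniqueness
  have huniv : ∫⁻ ω, G ω ∂Q = 1 := by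
    have h := hcyl 0 Set.univ MeasurableSet.univ
    rw [Set.preimage_univ, Measure.restrict_univ, measure_univ] at h
    exact h
  have hwfin : IsFiniteMeasure (Q.withDensity G) := by
    constructor
    rw [withDensity_apply _ MeasurableSet.univ, Measure.restrict_univ, huniv]
    exact ENNReal.one_lt_top
  have hwd : Q.withDensity G = P := by
    refine ext_of_generate_finite (measurableCylinders fun _ : ℕ => ℝ)
      generateFrom_measurableCylinders.symm isPiSystem_measurableCylinders ?_ ?_
    · intro s hs
      obtain ⟨I, S, hS, rfl⟩ := (mem_measurableCylinders s).mp hs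
      have hIm : ∀ i : I, (i : ℕ) < I.sup id + 1 :=
        fun i => Nat.lt_succ_of_le (Finset.le_sup (f := id) i.2)
      set B : Set (Fin (I.sup id + 1) → ℝ) :=
        (fun x : Fin (I.sup id + 1) → ℝ => fun i : I => x ⟨(i : ℕ), hIm i⟩) ⁻¹' S with hB
      have hBm : MeasurableSet B :=
        (measurable_pi_lambda _ fun i => measurable_pi_apply _) hS
      have hceq : cylinder I S = kakProj (I.sup id + 1) ⁻¹' B := rfl
      rw [hceq, withDensity_apply _ (kakProj_measurable _ hBm)]
      exact hcyl _ B hBm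
    · rw [withDensity_apply _ MeasurableSet.univ, Measure.restrict_univ, huniv, measure_univ]
  rw [← hwd]
  exact withDensity_absolutelyContinuous Q G

/-- Finite cumulative squared signal-to-noise implies no resolution: if
`∑ aₙ² < ∞`, the infinite product measures `P₊ = ⨂ N(aₙ,1)` and `P₋ = ⨂ N(0,1)`
on `ℕ → ℝ` (characterized by their finite-dimensional marginals) are mutually
absolutely continuous (equivalent). -/
theorem kakutani_equivalence_of_summable (a : ℕ → ℝ)
    (hsum : Summable (fun n => (a n)^2))
    (Pp Pm : Measure (ℕ → ℝ)) [IsProbabilityMeasure Pp] [IsProbabilityMeasure Pm]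
    (hPp : ∀ n : ℕ, Measure.map (fun ω (i : Fin n) => ω i) Pp =
      Measure.pi fun i : Fin n => gaussianReal (a i) 1)
    (hPm : ∀ n : ℕ, Measure.map (fun ω (i : Fin n) => ω i) Pm =
      Measure.pi fun _ : Fin n => gaussianReal 0 1) :
    Pp ≪ Pm ∧ Pm ≪ Pp := by
  constructor
  · exact kak_ac a (fun _ => 0) (by simpa using hsum) Pp Pm hPp hPm
  · exact kak_ac (fun _ => 0) a (by simpa using hsum) Pm Pp hPm hPp
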